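/- Let H be a Hilbert space, 0 < q < 1, and Z ∈ B(H) satisfying Z*Z − q Z Z* = (1−q)·1, with polar decomposition Z = T|Z| (T an isometry). Then Z = T + Σ_{k=0}^∞ (√(1−q^{k+1}) − 1)·T^{k+1}(1−TT*)(T*)^k, where the series converges in norm. -/

import Mathlib

set_option synthInstance.maxHeartbeats 400000
set_option maxHeartbeats 1600000

theorem quantum_disc_generator_series
    {H : Type*} [NormedAddCommGroup H] [InnerProductSpace ℂ H] [CompleteSpace H]
    (q : ℝ) (hq0 : 0 < q) (hq1 : q < 1) (T Z : H →L[ℂ] H)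
    (hT : star T * T = 1)
    (hZ : Z = T * CFC.sqrt (star Z * Z))
    (hrel : star Z * Z - (q : ℂ) • (Z * star Z) = ((1 - q : ℝ) : ℂ) • 1) :
    HasSum (fun k : ℕ =>
        ((Real.sqrt (1 - q ^ (k + 1)) - 1 : ℝ) : ℂ) •
          ((T ^ (k + 1)) * ((1 : H →L[ℂ] H) - T * star T) * ((star T) ^ k)))
      (Z - T) := by
  set A := star Z * Z with hAdef
  have hApos : 0 ≤ A := star_mul_self_nonneg Z
  set P : H →L[ℂ] H := 1 - T * star T with hPdef
  set Q : ℕ → (H →L[ℂ] H) := fun k => T ^ k * P * (star T) ^ k with hQdef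
  -- ## basic algebra of T, P, Q
  have hTT : ∀ n : ℕ, (star T) ^ n * T ^ n = 1 := by
    intro n; induction n with
    | zero => simp
    | succ n ih => rw [pow_succ, pow_succ', mul_assoc, ← mul_assoc (star T), hT, one_mul, ih]
  have hTTk : ∀ j m : ℕ, (star T) ^ j * T ^ (j + m) = T ^ m := by
    intro j m; rw [pow_add, ← mul_assoc, hTT, one_mul]
  have hPT : P * T = 0 := by simp [hPdef, sub_mul, mul_assoc, hT]
  have hPstar : star P = P := by simp [hPdef, star_sub, star_mul]
  have hPP : P * P = P := by
    have h1 : T * star T * (T * star T) = T * star T := by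
      rw [mul_assoc, ← mul_assoc (star T), hT, one_mul]
    simp only [hPdef, mul_sub, sub_mul, one_mul, mul_one, h1]
    abel
  have hQstar : ∀ k, star (Q k) = Q k := by
    intro k; simp [hQdef, star_mul, star_pow, hPstar, mul_assoc]
  have hQj : ∀ k, Q k = star (P * (star T) ^ k) * (P * (star T) ^ k) := by
    intro k
    have h1 : star (P * (star T) ^ k) = T ^ k * P := by
      simp [star_mul, star_pow, hPstar]
    rw [h1, hQdef, ← mul_assoc, mul_assoc (T ^ k) P P, hPP]
  have hQmul_lt : ∀ j m : ℕ, Q j * Q (j + (m + 1)) = 0 := by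
    intro j m
    have h2 : ∀ X : H →L[ℂ] H, (star T) ^ j * (T ^ (j + (m + 1)) * X) = T ^ (m + 1) * X := by
      intro X; rw [← mul_assoc, hTTk]
    have h3 : ∀ X : H →L[ℂ] H, P * (T ^ (m + 1) * X) = 0 := by
      intro X; rw [← mul_assoc, pow_succ', ← mul_assoc, hPT, zero_mul, zero_mul]
    simp only [hQdef, mul_assoc, h2, h3, mul_zero]
  have hQQself : ∀ j, Q j * Q j = Q j := by
    intro j
    have h4 : ∀ X : H →L[ℂ] H, (star T) ^ j * (T ^ j * X) = X := by
      intro X; rw [← mul_assoc, hTT, one_mul]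
    have h5 : ∀ X : H →L[ℂ] H, P * (P * X) = P * X := by
      intro X; rw [← mul_assoc, hPP]
    simp only [hQdef, mul_assoc, h4, h5]
  have hQmul : ∀ j k, j ≠ k → Q j * Q k = 0 := by
    intro j k hjk
    rcases lt_or_gt_of_ne hjk with h | h
    · obtain ⟨m, rfl⟩ : ∃ m, k = j + (m + 1) := ⟨k - j - 1, by omega⟩
      exact hQmul_lt j m
    · obtain ⟨m, rfl⟩ : ∃ m, j = k + (m + 1) := ⟨j - k - 1, by omega⟩
      have := congrArg star (hQmul_lt k m)
      simpa [star_mul, hQstar] using this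
  have hsumQ : ∀ n : ℕ, ∑ j ∈ Finset.range n, Q j = 1 - T ^ n * (star T) ^ n := by
    intro n; induction n with
    | zero => simp
    | succ n ih =>
      rw [Finset.sum_range_succ, ih, hQdef]
      rw [pow_succ T n, pow_succ' (star T) n]
      simp only [hPdef, mul_sub, sub_mul, mul_one, one_mul, mul_assoc]
      abel
  have hTnTn : ∀ n : ℕ, (0 : H →L[ℂ] H) ≤ T ^ n * (star T) ^ n := by
    intro n
    have h : T ^ n * (star T) ^ n = star ((star T) ^ n) * ((star T) ^ n) := by
      rw [star_pow, star_star]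
    rw [h]; exact star_mul_self_nonneg _
  have hsumQ_le : ∀ n, ∑ j ∈ Finset.range n, Q j ≤ 1 := by
    intro n; rw [hsumQ]; exact sub_le_self 1 (hTnTn n)
  have hQnorm : ∀ k, ‖Q k‖ ≤ 1 := by
    intro k
    have h1 : ‖Q k‖ * ‖Q k‖ = ‖Q k‖ := by
      calc ‖Q k‖ * ‖Q k‖ = ‖star (Q k) * Q k‖ := (CStarRing.norm_star_mul_self).symm
      _ = ‖Q k‖ := by rw [hQstar, hQQself k]
    nlinarith [norm_nonneg (Q k)]
  -- ## coefficients
  have hqpow_lt : ∀ k : ℕ, q ^ (k + 1) < 1 := fun k => pow_lt_one₀ hq0.le hq1 k.succ_ne_zero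
  have hqpow_pos : ∀ k : ℕ, 0 < q ^ (k + 1) := fun k => pow_pos hq0 _
  have hsqrt_nonneg : ∀ k : ℕ, 0 ≤ Real.sqrt (1 - q ^ (k + 1)) := fun k => Real.sqrt_nonneg _
  have hcoeff : ∀ k : ℕ,
      (Real.sqrt (1 - q ^ (k+1)) - 1) * (Real.sqrt (1 - q ^ (k+1)) - 1)
        + (Real.sqrt (1 - q ^ (k+1)) - 1) + (Real.sqrt (1 - q ^ (k+1)) - 1) = -(q ^ (k+1)) := by
    intro k
    have h0 : (0:ℝ) ≤ 1 - q ^ (k+1) := by linarith [hqpow_lt k]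
    linear_combination Real.sq_sqrt h0
  have habs : ∀ k : ℕ, |Real.sqrt (1 - q ^ (k+1)) - 1| ≤ q ^ (k+1) := by
    intro k
    have h0 : (0:ℝ) ≤ 1 - q ^ (k+1) := by linarith [hqpow_lt k]
    have h2 : 1 - q ^ (k+1) ≤ Real.sqrt (1 - q ^ (k+1)) := by
      nlinarith [Real.sq_sqrt h0, Real.sqrt_nonneg (1 - q ^ (k+1)), hqpow_lt k, hqpow_pos k]
    have h3 : Real.sqrt (1 - q ^ (k+1)) ≤ 1 := by
      nlinarith [Real.sq_sqrt h0, Real.sqrt_nonneg (1 - q ^ (k+1)), hqpow_pos k]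
    rw [abs_of_nonpos (by linarith)]
    linarith
  have hgeom : Summable (fun k : ℕ => q ^ (k + 1)) := by
    simpa [pow_succ'] using (summable_geometric_of_lt_one hq0.le hq1).mul_left q
  -- ## the two series
  set F : ℕ → (H →L[ℂ] H) := fun k => ((Real.sqrt (1 - q ^ (k+1)) - 1 : ℝ) : ℂ) • Q k with hFdef
  set G : ℕ → (H →L[ℂ] H) := fun k => ((q ^ (k + 1) : ℝ) : ℂ) • Q k with hGdef
  have hFnorm : ∀ k, ‖F k‖ ≤ q ^ (k + 1) := by
    intro k
    rw [hFdef]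
    calc ‖((Real.sqrt (1 - q ^ (k+1)) - 1 : ℝ) : ℂ) • Q k‖
        = ‖((Real.sqrt (1 - q ^ (k+1)) - 1 : ℝ) : ℂ)‖ * ‖Q k‖ := norm_smul _ _
    _ ≤ |Real.sqrt (1 - q ^ (k+1)) - 1| * 1 := by
        rw [Complex.norm_real, Real.norm_eq_abs]
        exact mul_le_mul_of_nonneg_left (hQnorm k) (abs_nonneg _)
    _ ≤ q ^ (k+1) := by rw [mul_one]; exact habs k
  have hGnorm : ∀ k, ‖G k‖ ≤ q ^ (k + 1) := by
    intro k
    rw [hGdef]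
    calc ‖((q ^ (k+1) : ℝ) : ℂ) • Q k‖ = ‖((q ^ (k+1) : ℝ) : ℂ)‖ * ‖Q k‖ := norm_smul _ _
    _ ≤ |q ^ (k+1)| * 1 := by
        rw [Complex.norm_real, Real.norm_eq_abs]
        exact mul_le_mul_of_nonneg_left (hQnorm k) (abs_nonneg _)
    _ = q ^ (k+1) := by rw [mul_one, abs_of_pos (pow_pos hq0 _)]
  obtain ⟨S, hS⟩ : Summable F := Summable.of_norm_bounded hgeom hFnorm
  obtain ⟨D, hD⟩ : Summable G := Summable.of_norm_bounded hgeom hGnorm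
  -- ## sqrt facts and the recursion A = (1-q)•1 + q•(T A T*)
  have hsqrtA : CFC.sqrt A * CFC.sqrt A = A := CFC.sqrt_mul_sqrt_self A hApos
  have hZZstar : Z * star Z = T * A * star T := by
    conv_lhs => rw [hZ]
    rw [star_mul, (IsSelfAdjoint.of_nonneg (CFC.sqrt_nonneg _)).star_eq,
      mul_assoc, ← mul_assoc (CFC.sqrt A), hsqrtA, ← mul_assoc]
  have hArec : A = ((1 - q : ℝ) : ℂ) • 1 + (q : ℂ) • (T * A * star T) := by
    have h := hrel
    rw [sub_eq_iff_eq_add] at h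
    conv_lhs => rw [h]
    rw [hZZstar]
  -- ## the recursion for 1 - D
  have hTQ : ∀ k, T * Q k * star T = Q (k + 1) := by
    intro k
    simp only [hQdef]
    rw [pow_succ' T k, pow_succ (star T) k]
    simp only [mul_assoc]
  have hTD : HasSum (fun k => ((q ^ (k+1) : ℝ) : ℂ) • Q (k + 1)) (T * D * star T) := by
    have h2 : ∀ k, T * G k * star T = ((q ^ (k+1) : ℝ) : ℂ) • Q (k + 1) := by
      intro k
      simp only [hGdef, mul_smul_comm, smul_mul_assoc]
      rw [mul_assoc, ← mul_assoc T (Q k), hTQ]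
    simpa only [h2] using (hD.mul_left T).mul_right (star T)
  have hDshift : HasSum (fun k => G (k + 1)) (D - G 0) := by
    refine (hasSum_nat_add_iff 1).mpr ?_
    simpa using hD
  have hqTD : HasSum (fun k => G (k + 1)) ((q : ℂ) • (T * D * star T)) := by
    have h3 : ∀ k, G (k + 1) = (q : ℂ) • (((q ^ (k+1) : ℝ) : ℂ) • Q (k + 1)) := by
      intro k
      simp only [hGdef, smul_smul]
      congr 1
      rw [← Complex.ofReal_mul, ← pow_succ']
    simpa only [← h3] using hTD.const_smul (q : ℂ)
  have hTDD : (q : ℂ) • (T * D * star T) = D - G 0 := hqTD.unique hDshift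
  have h1Drec : (1 : H →L[ℂ] H) - D = ((1 - q : ℝ) : ℂ) • 1 + (q : ℂ) • (T * (1 - D) * star T) := by
    have e1 : T * ((1 : H →L[ℂ] H) - D) * star T = T * star T - T * D * star T := by
      rw [mul_sub, sub_mul, mul_one]
    rw [e1, smul_sub, hTDD]
    have e2 : G 0 = (q : ℂ) • ((1 : H →L[ℂ] H) - T * star T) := by
      simp [hGdef, hQdef, hPdef]
    rw [e2]
    push_cast
    module
  -- ## A = 1 - D via the contraction argument
  have hXq : A - (1 - D) = (q : ℂ) • (T * (A - (1 - D)) * star T) := by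
    rw [mul_sub, sub_mul, smul_sub]
    conv_lhs => rw [hArec, h1Drec]
    abel
  have hXn : ∀ n : ℕ, A - (1 - D) = ((q : ℂ) ^ n) • (T ^ n * (A - (1 - D)) * (star T) ^ n) := by
    intro n; induction n with
    | zero => simp
    | succ n ih =>
      calc A - (1 - D) = (q : ℂ) • (T * (A - (1 - D)) * star T) := hXq
      _ = (q : ℂ) • (T * (((q : ℂ) ^ n) • (T ^ n * (A - (1 - D)) * (star T) ^ n)) * star T) := by
          rw [← ih]
      _ = ((q : ℂ) ^ (n+1)) • (T ^ (n+1) * (A - (1 - D)) * (star T) ^ (n+1)) := by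
          rw [mul_smul_comm, smul_mul_assoc, smul_smul, ← pow_succ']
          congr 1
          rw [pow_succ' T, pow_succ (star T)]
          simp only [mul_assoc]
  have hTle : ‖T‖ ≤ 1 := by
    have h1 : ‖T‖ * ‖T‖ = ‖(1 : H →L[ℂ] H)‖ := by rw [← CStarRing.norm_star_mul_self, hT]
    have h2 : ‖(1 : H →L[ℂ] H)‖ ≤ 1 := ContinuousLinearMap.norm_id_le
    nlinarith [norm_nonneg T]
  have hSle : ‖star T‖ ≤ 1 := by rw [norm_star]; exact hTle
  have hpow_le : ∀ (W : H →L[ℂ] H), ‖W‖ ≤ 1 → ∀ n : ℕ, ‖W ^ n‖ ≤ 1 := by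
    intro W hW n
    induction n with
    | zero => rw [pow_zero]; exact ContinuousLinearMap.norm_id_le
    | succ n ih =>
      rw [pow_succ]
      calc ‖W ^ n * W‖ ≤ ‖W ^ n‖ * ‖W‖ := norm_mul_le _ _
      _ ≤ 1 := by nlinarith [norm_nonneg (W ^ n), norm_nonneg W]
  have hAD : A = 1 - D := by
    have hbound : ∀ n : ℕ, ‖A - (1 - D)‖ ≤ q ^ n * ‖A - (1 - D)‖ := by
      intro n
      conv_lhs => rw [hXn n]
      rw [norm_smul]
      have h1 : ‖T ^ n * (A - (1 - D)) * (star T) ^ n‖ ≤ ‖A - (1 - D)‖ := by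
        calc ‖T ^ n * (A - (1 - D)) * (star T) ^ n‖
            ≤ ‖T ^ n * (A - (1 - D))‖ * ‖(star T) ^ n‖ := norm_mul_le _ _
        _ ≤ ‖T ^ n‖ * ‖A - (1 - D)‖ * ‖(star T) ^ n‖ := by
            gcongr; exact norm_mul_le _ _
        _ ≤ 1 * ‖A - (1 - D)‖ * 1 := by
            gcongr <;> first
              | positivity
              | exact hpow_le T hTle n
              | exact hpow_le (star T) hSle n
        _ = ‖A - (1 - D)‖ := by ring
      have h2 : ‖(q : ℂ) ^ n‖ = q ^ n := by
        rw [norm_pow, Complex.norm_real, Real.norm_eq_abs, abs_of_pos hq0]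
      rw [h2]
      exact mul_le_mul_of_nonneg_left h1 (pow_nonneg hq0.le n)
    have hle : ‖A - (1 - D)‖ ≤ 0 := by
      refine ge_of_tendsto' (x := Filter.atTop (α := ℕ)) ?_ hbound
      simpa using (tendsto_pow_atTop_nhds_zero_of_lt_one hq0.le hq1).mul_const ‖A - (1 - D)‖
    have hz : A - (1 - D) = 0 := by
      have := le_antisymm hle (norm_nonneg _)
      rwa [norm_eq_zero] at this
    exact sub_eq_zero.mp hz
  -- ## B = 1 + S squares to A
  have hss : ∀ n : ℕ, (∑ j ∈ Finset.range n, F j) * (∑ j ∈ Finset.range n, F j)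
      = ∑ j ∈ Finset.range n,
          (((Real.sqrt (1 - q ^ (j+1)) - 1) * (Real.sqrt (1 - q ^ (j+1)) - 1) : ℝ) : ℂ) • Q j := by
    intro n
    rw [Finset.sum_mul_sum]
    refine Finset.sum_congr rfl fun j hj => ?_
    rw [Finset.sum_eq_single j]
    · simp only [hFdef]
      rw [smul_mul_smul_comm, hQQself j, ← Complex.ofReal_mul]
    · intro k _ hkj
      simp only [hFdef]
      rw [smul_mul_smul_comm, hQmul j k (Ne.symm hkj), smul_zero]
    · intro hj'; exact absurd hj hj'
  have hterm : ∀ j : ℕ,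
      F j + (F j + (((Real.sqrt (1 - q ^ (j+1)) - 1) * (Real.sqrt (1 - q ^ (j+1)) - 1) : ℝ) : ℂ) • Q j)
        = -(G j) := by
    intro j
    simp only [hFdef, hGdef, ← add_smul, ← neg_smul]
    congr 1
    rw [← Complex.ofReal_add, ← Complex.ofReal_add, ← Complex.ofReal_neg]
    congr 1
    linear_combination hcoeff j
  have hBnsq : ∀ n : ℕ,
      (1 + ∑ j ∈ Finset.range n, F j) * (1 + ∑ j ∈ Finset.range n, F j)
        = 1 - ∑ j ∈ Finset.range n, G j := by
    intro n
    have expand : (1 + ∑ j ∈ Finset.range n, F j) * (1 + ∑ j ∈ Finset.range n, F j)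
        = 1 + ((∑ j ∈ Finset.range n, F j)
            + ((∑ j ∈ Finset.range n, F j)
              + (∑ j ∈ Finset.range n, F j) * (∑ j ∈ Finset.range n, F j))) := by
      noncomm_ring
    rw [expand, hss n, ← Finset.sum_add_distrib, ← Finset.sum_add_distrib]
    rw [show (∑ j ∈ Finset.range n,
        (F j + (F j + (((Real.sqrt (1 - q ^ (j+1)) - 1) * (Real.sqrt (1 - q ^ (j+1)) - 1) : ℝ) : ℂ) • Q j)))
        = ∑ j ∈ Finset.range n, -(G j) from Finset.sum_congr rfl fun j _ => hterm j]
    rw [Finset.sum_neg_distrib, ← sub_eq_add_neg]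
  have hBn_tendsto : Filter.Tendsto (fun n => 1 + ∑ j ∈ Finset.range n, F j)
      Filter.atTop (nhds (1 + S)) :=
    tendsto_const_nhds.add hS.tendsto_sum_nat
  have hGn_tendsto : Filter.Tendsto (fun n => (1 : H →L[ℂ] H) - ∑ j ∈ Finset.range n, G j)
      Filter.atTop (nhds (1 - D)) :=
    tendsto_const_nhds.sub hD.tendsto_sum_nat
  have hBsq : (1 + S) * (1 + S) = A := by
    rw [hAD]
    refine tendsto_nhds_unique (hBn_tendsto.mul hBn_tendsto) ?_
    simpa only [hBnsq] using hGn_tendsto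
  -- ## positivity of 1 + S
  have hsmulQ : ∀ (r : ℝ), 0 ≤ r → ∀ j, (0 : H →L[ℂ] H) ≤ ((r : ℝ) : ℂ) • Q j := by
    intro r hr j
    have key : ((r : ℝ) : ℂ) • Q j
        = star (((Real.sqrt r : ℝ) : ℂ) • (P * (star T) ^ j))
          * (((Real.sqrt r : ℝ) : ℂ) • (P * (star T) ^ j)) := by
      rw [star_smul, smul_mul_smul_comm, ← hQj j, Complex.star_def, Complex.conj_ofReal,
        ← Complex.ofReal_mul, Real.mul_self_sqrt hr]
    rw [key]
    exact star_mul_self_nonneg _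
  have hBn_nonneg : ∀ n : ℕ, (0 : H →L[ℂ] H) ≤ 1 + ∑ j ∈ Finset.range n, F j := by
    intro n
    have h1 : (∑ j ∈ Finset.range n, F j)
        = (∑ j ∈ Finset.range n, ((Real.sqrt (1 - q ^ (j+1)) : ℝ) : ℂ) • Q j)
          - ∑ j ∈ Finset.range n, Q j := by
      rw [← Finset.sum_sub_distrib]
      refine Finset.sum_congr rfl fun j _ => ?_
      simp only [hFdef]
      rw [Complex.ofReal_sub, sub_smul, Complex.ofReal_one, one_smul]
    rw [h1]
    have h2 : (0 : H →L[ℂ] H) ≤ 1 - ∑ j ∈ Finset.range n, Q j :=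
      sub_nonneg.mpr (hsumQ_le n)
    have h3 : (0 : H →L[ℂ] H)
        ≤ ∑ j ∈ Finset.range n, ((Real.sqrt (1 - q ^ (j+1)) : ℝ) : ℂ) • Q j :=
      Finset.sum_nonneg fun j _ => hsmulQ _ (hsqrt_nonneg j) j
    have e : (1 : H →L[ℂ] H)
        + ((∑ j ∈ Finset.range n, ((Real.sqrt (1 - q ^ (j+1)) : ℝ) : ℂ) • Q j)
            - ∑ j ∈ Finset.range n, Q j)
        = (1 - ∑ j ∈ Finset.range n, Q j)
          + ∑ j ∈ Finset.range n, ((Real.sqrt (1 - q ^ (j+1)) : ℝ) : ℂ) • Q j := by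
      abel
    rw [e]
    exact add_nonneg h2 h3
  have hBpos : (0 : H →L[ℂ] H) ≤ 1 + S :=
    (CStarAlgebra.isClosed_nonneg).mem_of_tendsto hBn_tendsto
      (Filter.Eventually.of_forall hBn_nonneg)
  have hsqrt_eq : CFC.sqrt A = 1 + S := CFC.sqrt_unique hBsq hBpos
  -- ## conclusion
  have hZT : Z - T = T * S := by
    conv_lhs => rw [hZ, hsqrt_eq]
    rw [mul_add, mul_one]
    abel
  have hfin : HasSum (fun k => T * F k) (T * S) := hS.mul_left T
  have hterm2 : ∀ k, T * F k
      = ((Real.sqrt (1 - q ^ (k + 1)) - 1 : ℝ) : ℂ) • (T ^ (k + 1) * P * (star T) ^ k) := by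
    intro k
    simp only [hFdef, mul_smul_comm]
    congr 1
    simp only [hQdef]
    rw [pow_succ' T k]
    simp only [mul_assoc]
  rw [hZT]
  simpa only [hterm2] using hfin
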